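/- Let G be a real symmetric matrix indexed by a finite nonempty type, let G⁺ be its stoquastic, and let β ≥ 0. Then 0 < Tr exp(βG) ≤ Tr exp(βG⁺); equivalently, the average-sign ratio Tr exp(βG⁺)/Tr exp(βG) is at least 1. -/

import Mathlib

open Matrix Finset

/-- The stoquastic of a real matrix: keep the diagonal, take absolute values off-diagonal. -/
def stoq {n : Type*} [DecidableEq n] (A : Matrix n n ℝ) : Matrix n n ℝ :=
  fun i j => if i = j then A i j else |A i j|

lemma stoq_isHermitian {n : Type*} [Fintype n] [DecidableEq n] {A : Matrix n n ℝ}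
    (hA : A.IsHermitian) : (stoq A).IsHermitian := by
  ext i j
  by_cases h : i = j
  · subst h; simp [stoq, Matrix.conjTranspose_apply]
  · have := hA.apply i j
    simp only [Matrix.conjTranspose_apply, stoq, h, Ne.symm h, if_false, star_trivial] at *
    rw [this]

section aux
variable {n : Type*} [Fintype n] [DecidableEq n]

/-- Entrywise domination is preserved by matrix powers. -/
lemma abs_pow_apply_le {M N : Matrix n n ℝ} (h : ∀ i j, |M i j| ≤ N i j) :
    ∀ (k : ℕ) (i j : n), |(M ^ k) i j| ≤ (N ^ k) i j := by
  intro k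
  induction k with
  | zero =>
    intro i j
    by_cases hij : i = j <;> simp [Matrix.one_apply, hij]
  | succ k ih =>
    intro i j
    rw [pow_succ, pow_succ, Matrix.mul_apply, Matrix.mul_apply]
    refine (Finset.abs_sum_le_sum_abs _ _).trans (Finset.sum_le_sum fun l _ => ?_)
    rw [abs_mul]
    exact mul_le_mul (ih i l) (h l j) (abs_nonneg _) ((abs_nonneg _).trans (ih i l))

lemma trace_pow_le {M N : Matrix n n ℝ} (h : ∀ i j, |M i j| ≤ N i j) (k : ℕ) :
    (M ^ k).trace ≤ (N ^ k).trace := by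
  refine Finset.sum_le_sum fun i _ => ?_
  exact (le_abs_self _).trans (abs_pow_apply_le h k i i)

lemma trace_exp_le_of_abs_le {M N : Matrix n n ℝ} (h : ∀ i j, |M i j| ≤ N i j) :
    (NormedSpace.exp M).trace ≤ (NormedSpace.exp N).trace := by
  letI : SeminormedRing (Matrix n n ℝ) := Matrix.linftyOpSemiNormedRing
  letI : NormedRing (Matrix n n ℝ) := Matrix.linftyOpNormedRing
  letI : NormedAlgebra ℝ (Matrix n n ℝ) := Matrix.linftyOpNormedAlgebra
  set T : Matrix n n ℝ →L[ℝ] ℝ :=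
    LinearMap.toContinuousLinearMap (Matrix.traceLinearMap n ℝ ℝ) with hT
  have hTapp : ∀ A : Matrix n n ℝ, T A = A.trace := fun A => rfl
  have hM : Summable fun k : ℕ => ((Nat.factorial k : ℝ))⁻¹ • M ^ k :=
    NormedSpace.expSeries_summable' M
  have hN : Summable fun k : ℕ => ((Nat.factorial k : ℝ))⁻¹ • N ^ k :=
    NormedSpace.expSeries_summable' N
  have eM : (NormedSpace.exp M).trace = ∑' k : ℕ, ((Nat.factorial k : ℝ))⁻¹ * (M ^ k).trace := by
    rw [← hTapp, NormedSpace.exp_eq_tsum ℝ, T.map_tsum hM]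
    simp [hTapp, Matrix.trace_smul, smul_eq_mul]
  have eN : (NormedSpace.exp N).trace = ∑' k : ℕ, ((Nat.factorial k : ℝ))⁻¹ * (N ^ k).trace := by
    rw [← hTapp, NormedSpace.exp_eq_tsum ℝ, T.map_tsum hN]
    simp [hTapp, Matrix.trace_smul, smul_eq_mul]
  rw [eM, eN]
  refine Summable.tsum_le_tsum (fun k => ?_) ?_ ?_
  · exact mul_le_mul_of_nonneg_left (trace_pow_le h k) (by positivity)
  · have := hM.map T T.continuous
    simpa [Function.comp_def, hTapp, Matrix.trace_smul, smul_eq_mul] using this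
  · have := hN.map T T.continuous
    simpa [Function.comp_def, hTapp, Matrix.trace_smul, smul_eq_mul] using this

lemma trace_exp_pos [Nonempty n] {M : Matrix n n ℝ} (hM : M.IsHermitian) :
    0 < (NormedSpace.exp M).trace := by
  set B := NormedSpace.exp ((1 / 2 : ℝ) • M) with hBdef
  have hhalf : (1 / 2 : ℝ) • M + (1 / 2 : ℝ) • M = M := by
    rw [← add_smul]; norm_num
  have hexp : NormedSpace.exp M = B * B := by
    rw [← hhalf, Matrix.exp_add_of_commute _ _ (Commute.refl _)]
  have hBh : ((1 / 2 : ℝ) • M).IsHermitian := by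
    unfold Matrix.IsHermitian
    rw [Matrix.conjTranspose_smul, hM]
    norm_num
  have hBherm : B.IsHermitian := hBh.exp
  have hBsymm : ∀ i j, B j i = B i j := by
    intro i j
    have := congrFun (congrFun hBherm i) j
    simpa [Matrix.conjTranspose_apply] using this
  have hBne : B ≠ 0 := by
    have := Matrix.isUnit_exp ((1 / 2 : ℝ) • M)
    exact this.ne_zero
  obtain ⟨i₀, j₀, hij⟩ : ∃ i j, B i j ≠ 0 := by
    by_contra hc
    push_neg at hc
    exact hBne (by ext i j; simp [hc i j])
  have : (NormedSpace.exp M).trace = ∑ i, ∑ j, (B i j) ^ 2 := by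
    rw [hexp, Matrix.trace]
    refine Finset.sum_congr rfl fun i _ => ?_
    rw [Matrix.diag_apply, Matrix.mul_apply]
    exact Finset.sum_congr rfl fun j _ => by rw [hBsymm i j, sq]
  rw [this]
  refine Finset.sum_pos' (fun i _ => Finset.sum_nonneg fun j _ => sq_nonneg _)
    ⟨i₀, Finset.mem_univ _, ?_⟩
  refine Finset.sum_pos' (fun j _ => sq_nonneg _) ⟨j₀, Finset.mem_univ _, by positivity⟩

end aux

section aux2
variable {n : Type*} [Fintype n] [DecidableEq n]

lemma trace_exp_add_smul_one (A : Matrix n n ℝ) (r : ℝ) :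
    (NormedSpace.exp (A + r • (1 : Matrix n n ℝ))).trace =
      Real.exp r * (NormedSpace.exp A).trace := by
  letI : SeminormedRing (Matrix n n ℝ) := Matrix.linftyOpSemiNormedRing
  letI : NormedRing (Matrix n n ℝ) := Matrix.linftyOpNormedRing
  letI : NormedAlgebra ℝ (Matrix n n ℝ) := Matrix.linftyOpNormedAlgebra
  have hcomm : Commute A (r • (1 : Matrix n n ℝ)) :=
    (Commute.one_right A).smul_right r
  have h1 : NormedSpace.exp (r • (1 : Matrix n n ℝ)) = Real.exp r • 1 := by
    rw [← Algebra.algebraMap_eq_smul_one]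
    erw [← NormedSpace.algebraMap_exp_comm]
    rw [Real.exp_eq_exp_ℝ, Algebra.algebraMap_eq_smul_one]
  rw [Matrix.exp_add_of_commute _ _ hcomm, h1, mul_smul_comm, mul_one,
    Matrix.trace_smul, smul_eq_mul]

end aux2

/-- **Trace inequality for the stoquastic.** For a real symmetric matrix `G` and `β ≥ 0`,
we have `0 < Tr exp(βG) ≤ Tr exp(βG⁺)`; equivalently the average-sign ratio
`Tr exp(βG⁺)/Tr exp(βG)` is at least 1. -/
theorem trace_exp_pos_and_le_trace_exp_stoq {n : Type*} [Fintype n] [DecidableEq n] [Nonempty n]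
    {G : Matrix n n ℝ} (hG : G.IsHermitian) (β : ℝ) (hβ : 0 ≤ β) :
    0 < (NormedSpace.exp (β • G)).trace ∧
      (NormedSpace.exp (β • G)).trace ≤ (NormedSpace.exp (β • stoq G)).trace := by
  have hβG : (β • G).IsHermitian := by
    rw [Matrix.IsHermitian, Matrix.conjTranspose_smul, hG.eq, star_trivial]
  refine ⟨trace_exp_pos hβG, ?_⟩
  set c := ∑ j, |G j j| with hc
  have hci : ∀ i, |G i i| ≤ c := fun i =>
    Finset.single_le_sum (f := fun j => |G j j|) (fun j _ => abs_nonneg _) (Finset.mem_univ i)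
  have hbound : ∀ i j,
      |(β • (G + c • (1 : Matrix n n ℝ))) i j|
        ≤ (β • (stoq G + c • (1 : Matrix n n ℝ))) i j := by
    intro i j
    by_cases hij : i = j
    · subst hij
      simp only [Matrix.smul_apply, Matrix.add_apply, Matrix.one_apply_eq, smul_eq_mul,
        mul_one, stoq, if_pos rfl]
      rw [abs_mul, abs_of_nonneg hβ]
      have : 0 ≤ G i i + c := by
        have := hci i
        have := neg_abs_le (G i i)
        linarith
      rw [abs_of_nonneg this]
      simp
    · simp only [Matrix.smul_apply, Matrix.add_apply, Matrix.one_apply_ne hij, smul_eq_mul,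
        mul_zero, add_zero, stoq, if_neg hij]
      rw [abs_mul, abs_of_nonneg hβ]
  have hkey := trace_exp_le_of_abs_le hbound
  have e1 : β • (G + c • (1 : Matrix n n ℝ)) = β • G + (β * c) • (1 : Matrix n n ℝ) := by
    rw [smul_add, smul_smul]
  have e2 : β • (stoq G + c • (1 : Matrix n n ℝ))
      = β • stoq G + (β * c) • (1 : Matrix n n ℝ) := by
    rw [smul_add, smul_smul]
  rw [e1, e2, trace_exp_add_smul_one, trace_exp_add_smul_one] at hkey
  exact le_of_mul_le_mul_left hkey (Real.exp_pos _)
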